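/- Let q = 2^m with m odd, and let b ∈ F_q^* with Tr(b) = 0. Then there exists a unique c ∈ F_q^* with Tr(c) = 0 such that c^σ + c = b, where σ = 2^k and gcd(k,m) = 1. -/

import Mathlib

/-- For `q = 2^m` with `m` odd, `b ∈ F_q^*` with `Tr(b) = 0`, `σ = 2^k` with
`gcd(k,m) = 1`, there is a unique `c ∈ F_q^*` with `Tr(c) = 0` and `c^σ + c = b`. -/
theorem unique_trace_zero_solution (m k : ℕ) (hm : Odd m)
    (hk1 : 1 ≤ k) (hk2 : k ≤ m - 1) (hgcd : Nat.gcd k m = 1)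
    (F : Type*) [Field F] [Fintype F] [Algebra (ZMod 2) F] (hcard : Fintype.card F = 2 ^ m)
    (b : F) (hb0 : b ≠ 0) (hbt : Algebra.trace (ZMod 2) F b = 0) :
    ∃! c : F, c ≠ 0 ∧ Algebra.trace (ZMod 2) F c = 0 ∧ c ^ (2 ^ k) + c = b := by
  classical
  haveI hchar : CharP F 2 := charP_of_injective_ringHom (algebraMap (ZMod 2) F).injective 2
  have hm1 : 1 ≤ m := by
    rcases Nat.eq_zero_or_pos m with h | h
    · subst h; omega
    · exact h
  have hm2 : 2 ≤ m := by omega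
  haveI : FiniteDimensional (ZMod 2) F := Module.Finite.of_finite
  -- finrank = m
  have hfr : Module.finrank (ZMod 2) F = m := by
    have h := Module.card_eq_pow_finrank (K := ZMod 2) (V := F)
    rw [ZMod.card, hcard] at h
    exact (Nat.pow_right_injective (le_refl 2) h).symm
  -- trace of 1 is 1
  have htr1 : Algebra.trace (ZMod 2) F 1 = 1 := by
    have h := Algebra.trace_algebraMap (R := ZMod 2) (S := F) 1
    rw [map_one] at h
    rw [h, hfr, nsmul_eq_mul, mul_one]
    rw [Nat.odd_iff] at hm
    rw [← Nat.mod_add_div m 2, hm]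
    push_cast
    have h2 : (2 : ZMod 2) = 0 := by decide
    rw [h2, zero_mul, add_zero]
  -- x^(2^m) = x
  have hpm : ∀ x : F, x ^ (2 ^ m) = x := fun x => by
    rw [← hcard]; exact FiniteField.pow_card x
  -- key: x^(2^k) = x → x^2 = x
  have hker : ∀ x : F, x ^ (2 ^ k) = x → x ^ 2 = x := by
    intro x hx
    have hmul : ∀ n : ℕ, x ^ (2 ^ (k * n)) = x := by
      intro n
      induction n with
      | zero => simp
      | succ n ih =>
        have : 2 ^ (k * (n + 1)) = 2 ^ (k * n) * 2 ^ k := by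
          rw [← pow_add]; ring_nf
        rw [this, pow_mul, ih, hx]
    have hmulm : ∀ n : ℕ, x ^ (2 ^ (m * n)) = x := by
      intro n
      induction n with
      | zero => simp
      | succ n ih =>
        have : 2 ^ (m * (n + 1)) = 2 ^ (m * n) * 2 ^ m := by
          rw [← pow_add]; ring_nf
        rw [this, pow_mul, ih, hpm]
    obtain ⟨a, ha⟩ := Nat.exists_mul_mod_eq_one_of_coprime
      (Nat.Coprime.coprime_dvd_left dvd_rfl hgcd) (by omega)
    -- ha : k * a % m = 1
    have hdecomp : k * a = m * (k * a / m) + 1 := by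
      conv_lhs => rw [← Nat.div_add_mod (k * a) m]
      omega
    have h1 : x ^ (2 ^ (k * a)) = x := hmul a
    rw [hdecomp, pow_add, pow_mul, pow_one, hmulm (k * a / m)] at h1
    exact h1
  -- the ZMod 2-linear map c ↦ c^(2^k) + c
  have hr01 : ∀ r : ZMod 2, r = 0 ∨ r = 1 := by decide
  let f : F →ₗ[ZMod 2] F :=
    { toFun := fun x => x ^ (2 ^ k) + x
      map_add' := fun x y => by
        show (x + y) ^ (2 ^ k) + (x + y) = (x ^ (2 ^ k) + x) + (y ^ (2 ^ k) + y)
        rw [add_pow_char_pow]; ring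
      map_smul' := fun r x => by
        rcases hr01 r with h | h <;> subst h
        · simp only [zero_smul, RingHom.id_apply]
          rw [zero_pow (by positivity), add_zero]
        · simp }
  have hf_apply : ∀ x : F, f x = x ^ (2 ^ k) + x := fun _ => rfl
  -- kernel of f is span {1}
  have hker_mem : ∀ x : F, f x = 0 ↔ x = 0 ∨ x = 1 := by
    intro x
    rw [hf_apply]
    constructor
    · intro h
      have hx : x ^ (2 ^ k) = x :=
        (eq_neg_of_add_eq_zero_left h).trans (CharTwo.neg_eq x)
      have h2 : x ^ 2 = x := hker x hx
      have hmul0 : x * (x - 1) = 0 := by rw [mul_sub, mul_one, ← sq, h2, sub_self]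
      rcases mul_eq_zero.mp hmul0 with h | h
      · left; exact h
      · right; exact sub_eq_zero.mp h
    · rintro (h | h) <;> subst h
      · simp
      · simp [CharTwo.add_self_eq_zero]
  have hker_eq : LinearMap.ker f = Submodule.span (ZMod 2) {(1 : F)} := by
    ext x
    rw [LinearMap.mem_ker, hker_mem, Submodule.mem_span_singleton]
    constructor
    · rintro (h | h)
      · exact ⟨0, by simp [h]⟩
      · exact ⟨1, by simp [h]⟩
    · rintro ⟨r, rfl⟩
      rcases hr01 r with h | h <;> subst h <;> simp
  have hfk : Module.finrank (ZMod 2) (LinearMap.ker f) = 1 := by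
    rw [hker_eq]
    exact finrank_span_singleton one_ne_zero
  have hfrange : Module.finrank (ZMod 2) (LinearMap.range f) = m - 1 := by
    have := LinearMap.finrank_range_add_finrank_ker f
    rw [hfk, hfr] at this
    omega
  -- trace as linear map
  let T : F →ₗ[ZMod 2] ZMod 2 := Algebra.trace (ZMod 2) F
  -- trace is invariant under squaring
  have hTsq : ∀ x : F, T (x ^ 2) = T x := by
    intro x
    have hbij : Function.Bijective (frobenius F 2) :=
      Finite.injective_iff_bijective.mp (frobenius_inj F 2)
    let e : F ≃ₐ[ZMod 2] F :=
      { toFun := frobenius F 2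
        invFun := Function.surjInv hbij.2
        left_inv := Function.leftInverse_surjInv hbij
        right_inv := Function.rightInverse_surjInv hbij.2
        map_mul' := map_mul _
        map_add' := map_add _
        commutes' := fun r => by
          rcases hr01 r with h | h <;> subst h <;>
            simp [frobenius_def] }
    have := Algebra.trace_eq_of_algEquiv e x
    simpa [e, frobenius_def] using this
  have hTpow : ∀ (j : ℕ) (x : F), T (x ^ (2 ^ j)) = T x := by
    intro j
    induction j with
    | zero => intro x; simp
    | succ j ih =>
      intro x
      have : x ^ (2 ^ (j + 1)) = (x ^ (2 ^ j)) ^ 2 := by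
        rw [← pow_mul, pow_succ]
      rw [this, hTsq, ih]
  -- trace is surjective, so its kernel has finrank m - 1
  have hTrange : LinearMap.range T = ⊤ := by
    rw [eq_top_iff]
    rintro x -
    have h1 : (1 : ZMod 2) ∈ LinearMap.range T := ⟨1, htr1⟩
    simpa using Submodule.smul_mem _ x h1
  have hTker : Module.finrank (ZMod 2) (LinearMap.ker T) = m - 1 := by
    have h := LinearMap.finrank_range_add_finrank_ker T
    rw [hTrange, finrank_top, Module.finrank_self, hfr] at h
    omega
  have hle : LinearMap.range f ≤ LinearMap.ker T := by
    rintro x ⟨y, rfl⟩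
    rw [LinearMap.mem_ker, hf_apply, map_add, hTpow k y]
    exact CharTwo.add_self_eq_zero _
  have heq : LinearMap.range f = LinearMap.ker T :=
    Submodule.eq_of_le_of_finrank_eq hle (by rw [hfrange, hTker])
  have hbmem : b ∈ LinearMap.range f := by
    rw [heq, LinearMap.mem_ker]; exact hbt
  obtain ⟨c₀, hc₀⟩ := hbmem
  have hf1 : f 1 = 0 := by
    rw [hf_apply, one_pow]
    exact CharTwo.add_self_eq_zero _
  -- a solution with trace zero
  have hexists : ∃ c : F, T c = 0 ∧ f c = b := by
    rcases hr01 (T c₀) with h | h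
    · exact ⟨c₀, h, hc₀⟩
    · refine ⟨c₀ + 1, ?_, by rw [map_add, hc₀, hf1, add_zero]⟩
      rw [map_add, h, htr1]
      decide
  obtain ⟨c, hct, hcf⟩ := hexists
  have hcne : c ≠ 0 := by
    rintro rfl
    rw [map_zero] at hcf
    exact hb0 hcf.symm
  refine ⟨c, ⟨hcne, hct, by rw [← hf_apply, hcf]⟩, ?_⟩
  rintro y ⟨hyne, hyt, hyeq⟩
  have hsum : f (y + c) = 0 := by
    rw [map_add, hcf, hf_apply, hyeq, CharTwo.add_self_eq_zero]
  rcases (hker_mem _).mp hsum with h | h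
  · exact (eq_neg_of_add_eq_zero_left h).trans (CharTwo.neg_eq c)
  · exfalso
    have : T (y + c) = 1 := by rw [h, htr1]
    rw [map_add, hyt, hct, add_zero] at this
    exact zero_ne_one this
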